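/- Let f, g : C• → D• be chain maps between complexes in a graded additive category, and suppose f is chain homotopic to α·g for some scalar α (in the base ring). If A is a homotopically isolated direct summand of some Cⁱ (i.e., for every degree-zero homotopy h : C• → D•-1, the restriction of dh + hd to A is zero), and f and g agree and are nonzero on A, then α acts as the identity on the image, i.e., f is chain homotopic to g. -/

import Mathlib

/-- Homotopy isolation: let `f, g : C → D` be chain maps with `f` chain homotopic
to `α • g` for a scalar `α`.  If `A` is a homotopically isolated direct summand of
`C^{i+1}` (every degree-zero homotopy has `(dh + hd)|_A = 0`), `f` and `g` agree
and are nonzero on `A`, and scalars act without torsion on the target, then `f`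
is chain homotopic to `g`. -/
theorem homotopy_isolation
    (R : Type) [CommRing R] (C D : ℤ → Type)
    [∀ n, AddCommGroup (C n)] [∀ n, Module R (C n)]
    [∀ n, AddCommGroup (D n)] [∀ n, Module R (D n)]
    (dC : ∀ n, C n →ₗ[R] C (n+1)) (dD : ∀ n, D n →ₗ[R] D (n+1))
    (hddC : ∀ n (x : C n), dC (n+1) (dC n x) = 0)
    (hddD : ∀ n (x : D n), dD (n+1) (dD n x) = 0)
    (f g : ∀ n, C n →ₗ[R] D n)
    (hfc : ∀ n (x : C n), f (n+1) (dC n x) = dD n (f n x))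
    (hgc : ∀ n (x : C n), g (n+1) (dC n x) = dD n (g n x))
    (α : R) (i : ℤ) (A : Submodule R (C (i+1)))
    [NoZeroSMulDivisors R (D (i+1))]
    -- A is homotopically isolated
    (hiso : ∀ (h : ∀ n, C (n+1) →ₗ[R] D n), ∀ a ∈ A,
      dD i (h i a) + h (i+1) (dC (i+1) a) = 0)
    -- f and g agree and are nonzero on A
    (hagree : ∀ a ∈ A, f (i+1) a = g (i+1) a)
    (hnonzero : ∃ a ∈ A, f (i+1) a ≠ 0)
    -- f is chain homotopic to α • g
    (hhom : ∃ h : ∀ n, C (n+1) →ₗ[R] D n, ∀ n (x : C (n+1)),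
      f (n+1) x - α • g (n+1) x = dD n (h n x) + h (n+1) (dC (n+1) x)) :
    -- then f is chain homotopic to g
    ∃ h : ∀ n, C (n+1) →ₗ[R] D n, ∀ n (x : C (n+1)),
      f (n+1) x - g (n+1) x = dD n (h n x) + h (n+1) (dC (n+1) x) := by
  obtain ⟨h, hh⟩ := hhom
  obtain ⟨a, ha, hfa⟩ := hnonzero
  have h1 : f (i+1) a - α • g (i+1) a = 0 := by
    rw [hh i a, hiso h a ha]
  have h2 : (1 - α) • f (i+1) a = 0 := by
    rw [sub_smul, one_smul]
    nth_rewrite 2 [hagree a ha]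
    exact h1
  have hα : α = 1 := by
    rcases NoZeroSMulDivisors.eq_zero_or_eq_zero_of_smul_eq_zero h2 with h3 | h3
    · exact (sub_eq_zero.mp h3).symm
    · exact absurd h3 hfa
  refine ⟨h, fun n x => ?_⟩
  have := hh n x
  rwa [hα, one_smul] at this
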